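/- Under polynomial eigenvalue decay ρₖ ≤ Ck^{-α} (α > 1) and independent zero-mean noise with variance ≤ σ², the Tikhonov solution x_λ and B = (W^{-1/2}AᵀAW^{-1/2})^{1/4}W^{1/2} satisfy 𝔼[(1/n)‖B(x_λ − x*)‖²] ≤ Cλ^{1/2}(1/n)‖x*‖_W² + Cσ²/(nλ^{1/2+1/α}). -/

import Mathlib

open Matrix MeasureTheory ProbabilityTheory


lemma aux_bern {x p : ℝ} (hx0 : 0 ≤ x) (hx1 : x < 1) (hp : 0 ≤ p) :
    1 + p * x ≤ (1 - x) ^ (-p) := by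
  have h1 : 0 < 1 - x := by linarith
  have h2 : 0 ≤ 1 + p * x := by positivity
  have hw : (1/(p+1)) + (p/(p+1)) = 1 := by field_simp; ring
  have key := Real.geom_mean_le_arith_mean2_weighted
    (by positivity : (0:ℝ) ≤ 1/(p+1)) (by positivity : (0:ℝ) ≤ p/(p+1)) h2 h1.le hw
  have harith : 1/(p+1) * (1 + p*x) + p/(p+1) * (1-x) = 1 := by field_simp; ring
  rw [harith] at key
  have key2 : (1 + p*x) * (1-x)^p ≤ 1 := by
    have := Real.rpow_le_one (by positivity) key (by positivity : (0:ℝ) ≤ p+1)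
    rw [Real.mul_rpow (by positivity) (by positivity), ← Real.rpow_mul h2,
      ← Real.rpow_mul h1.le] at this
    have e1 : 1/(p+1) * (p+1) = 1 := by field_simp
    have e2 : p/(p+1) * (p+1) = p := by field_simp
    rw [e1, e2, Real.rpow_one] at this
    exact this
  rw [Real.rpow_neg h1.le]
  have hpow : 0 < (1-x)^p := Real.rpow_pos_of_pos h1 p
  have hinv : ((1-x)^p)⁻¹ * ((1-x)^p) = 1 := inv_mul_cancel₀ hpow.ne'
  nlinarith [key2, hpow, hinv]

lemma aux_telescope {β : ℝ} (hβ : 1 < β) {k : ℕ} (hk : 1 ≤ k) :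
    (β - 1) * ((k:ℝ)+1) ^ (-β) ≤ (k:ℝ) ^ (1-β) - ((k:ℝ)+1) ^ (1-β) := by
  set K : ℝ := (k:ℝ) + 1 with hK
  have hK1 : (1:ℝ) < K := by
    have : (1:ℝ) ≤ (k:ℝ) := by exact_mod_cast hk
    simp [hK]; linarith
  have hK0 : (0:ℝ) < K := by linarith
  set x : ℝ := 1/K with hx
  have hx0 : 0 ≤ x := by positivity
  have hx1 : x < 1 := by rw [hx, div_lt_one hK0]; linarith
  have hb := aux_bern hx0 hx1 (by linarith : (0:ℝ) ≤ β - 1)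
  -- (k:ℝ) = K * (1 - x)
  have hkK : (k:ℝ) = K * (1 - x) := by
    rw [hx]; field_simp [hK]; linarith
  have hKx : 0 < 1 - x := by linarith
  have hsplit : (k:ℝ) ^ (1-β) = K ^ (1-β) * (1-x) ^ (1-β) := by
    rw [hkK, Real.mul_rpow hK0.le hKx.le]
  have hexp : (1-x) ^ (1-β) = (1-x) ^ (-(β-1)) := by ring_nf
  have hKpos : 0 < K ^ (1-β) := Real.rpow_pos_of_pos hK0 _
  have hKmid : K ^ (-β) = K ^ (1-β) * K⁻¹ := by
    rw [← Real.rpow_neg_one K, ← Real.rpow_add hK0]; ring_nf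
  rw [hsplit, hexp, hKmid]
  have : 1 + (β-1) * x ≤ (1-x) ^ (-(β-1)) := hb
  have hxK : x = K⁻¹ := by rw [hx, one_div]
  calc (β - 1) * (K ^ (1-β) * K⁻¹) = K ^ (1-β) * (1 + (β-1)*x) - K ^ (1-β) := by
        rw [hxK]; ring
    _ ≤ K ^ (1-β) * ((1-x) ^ (-(β-1))) - K ^ (1-β) := by nlinarith [hKpos]
    _ = K ^ (1-β) * (1-x) ^ (-(β-1)) - K ^ (1-β) := by ring


lemma aux_tailsum {β : ℝ} (hβ : 1 < β) (m n : ℕ) (hm : 1 ≤ m) :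
    ∑ k ∈ Finset.Ico m n, ((k:ℝ)+1) ^ (-β) ≤ (m:ℝ) ^ (1-β) / (β-1) := by
  have hb0 : 0 < β - 1 := by linarith
  have hm0 : (0:ℝ) < (m:ℝ) := by exact_mod_cast hm
  rcases le_or_gt n m with h | h
  · rw [Finset.Ico_eq_empty (by omega)]
    simp
    positivity
  have step : ∀ k ∈ Finset.Ico m n, ((k:ℝ)+1) ^ (-β)
      ≤ ((k:ℝ) ^ (1-β) - ((k:ℝ)+1) ^ (1-β)) / (β-1) := by
    intro k hk
    rw [Finset.mem_Ico] at hk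
    have := aux_telescope hβ (le_trans hm hk.1)
    rw [le_div_iff₀ hb0]
    linarith
  calc ∑ k ∈ Finset.Ico m n, ((k:ℝ)+1) ^ (-β)
      ≤ ∑ k ∈ Finset.Ico m n, ((k:ℝ) ^ (1-β) - ((k:ℝ)+1) ^ (1-β)) / (β-1) :=
        Finset.sum_le_sum step
    _ = (∑ k ∈ Finset.Ico m n, (((k:ℝ)) ^ (1-β) - (((k:ℝ)+1)) ^ (1-β))) / (β-1) := by
        rw [Finset.sum_div]
    _ = ((m:ℝ) ^ (1-β) - (n:ℝ) ^ (1-β)) / (β-1) := by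
        congr 1
        rw [Finset.sum_Ico_eq_sum_range]
        have := Finset.sum_range_sub' (fun i => ((m:ℝ)+(i:ℝ)) ^ (1-β)) (n - m)
        simp only [Nat.cast_zero, add_zero, Nat.cast_one] at this
        rw [show ((n:ℝ)) = ((m:ℝ) + ((n-m : ℕ):ℝ)) by push_cast [Nat.cast_sub h.le]; ring]
        rw [← this]
        apply Finset.sum_congr rfl
        intro i _
        push_cast
        ring
    _ ≤ (m:ℝ) ^ (1-β) / (β-1) := by
        have hn0 : (0:ℝ) ≤ (n:ℝ) ^ (1-β) := Real.rpow_nonneg (by positivity) _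
        have hn0 : (0:ℝ) ≤ (n:ℝ) ^ (1-β) := Real.rpow_nonneg (by positivity) _
        gcongr
        linarith


set_option maxHeartbeats 1000000 in
lemma aux_specsum (C₀ α : ℝ) (hC₀ : 0 < C₀) (hα : 1 < α) :
    ∃ C₂ : ℝ, 0 < C₂ ∧ ∀ (lam : ℝ), 0 < lam → ∀ (n : ℕ), 0 < n → ∀ (ρ : Fin n → ℝ),
      (∀ k, 0 ≤ ρ k) →
      (∀ k : Fin n, ρ k ≤ C₀ * (((k:ℕ):ℝ)+1) ^ (-α)) →
      ∑ k, Real.sqrt (ρ k) * ρ k / (ρ k + lam)^2 ≤ C₂ * lam ^ (-(1/2 + 1/α)) := by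
  have hα0 : 0 < α := by linarith
  set β : ℝ := α + α/2 with hβdef
  have hβ : 1 < β := by rw [hβdef]; linarith
  have hb0 : 0 < β - 1 := by linarith
  set D : ℝ := Real.sqrt C₀ * C₀ with hD
  have hD0 : 0 < D := by rw [hD]; positivity
  have hb1 : (0:ℝ) < 1/(β-1) := div_pos one_pos hb0
  have hb2 : (0:ℝ) < (2:ℝ)^(β-1) := Real.rpow_pos_of_pos two_pos _
  have hbig1 : (0:ℝ) < D*(1+1/(β-1)) := mul_pos hD0 (by linarith)
  have hbig2 : (0:ℝ) < 1 + D*(2:ℝ)^(β-1)/(β-1) := by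
    have := div_pos (mul_pos hD0 hb2) hb0
    linarith
  refine ⟨D*(1+1/(β-1)) + (1 + D*(2:ℝ)^(β-1)/(β-1)), by linarith, ?_⟩
  intro lam hlam n hn ρ hρ hbound
  set L : ℝ := lam ^ (-(1/2 + 1/α)) with hL
  have hL0 : 0 < L := Real.rpow_pos_of_pos hlam _
  -- per-term bound 1 : f k ≤ lam ^ (-(1/2))
  have F1 : ∀ k : Fin n, Real.sqrt (ρ k) * ρ k / (ρ k + lam)^2 ≤ lam ^ (-(1/2) : ℝ) := by
    intro k
    have h1 : 0 ≤ ρ k := hρ k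
    have hden : (0:ℝ) < (ρ k + lam)^2 := by positivity
    have hsl : 0 < Real.sqrt lam := Real.sqrt_pos.2 hlam
    have hrw : lam ^ (-(1/2) : ℝ) = (Real.sqrt lam)⁻¹ := by
      rw [Real.rpow_neg hlam.le, Real.sqrt_eq_rpow]
    rw [hrw, div_le_iff₀ hden]
    have h12 : 2*(Real.sqrt lam * Real.sqrt (ρ k)) ≤ ρ k + lam := by
      nlinarith [sq_nonneg (Real.sqrt (ρ k) - Real.sqrt lam), Real.sq_sqrt h1, Real.sq_sqrt hlam.le]
    have key : Real.sqrt lam * (Real.sqrt (ρ k) * ρ k) ≤ (ρ k + lam)^2 := by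
      nlinarith [mul_le_mul_of_nonneg_right h12 h1, sq_nonneg (ρ k + lam),
        mul_nonneg (mul_nonneg (Real.sqrt_nonneg lam) (Real.sqrt_nonneg (ρ k))) h1, hlam, h1]
    calc Real.sqrt (ρ k) * ρ k = (Real.sqrt lam)⁻¹ * (Real.sqrt lam * (Real.sqrt (ρ k) * ρ k)) := by
          field_simp
      _ ≤ (Real.sqrt lam)⁻¹ * (ρ k + lam)^2 := mul_le_mul_of_nonneg_left key (by positivity)
  -- per-term bound 2 : f k ≤ D * (k+1)^(-β) / lam^2
  have F2 : ∀ k : Fin n, Real.sqrt (ρ k) * ρ k / (ρ k + lam)^2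
      ≤ D * (((k:ℕ):ℝ)+1) ^ (-β) / lam^2 := by
    intro k
    have h1 : 0 ≤ ρ k := hρ k
    set K : ℝ := ((k:ℕ):ℝ) + 1 with hK
    have hK0 : (0:ℝ) < K := by positivity
    have ht0 : (0:ℝ) < K ^ (-α) := Real.rpow_pos_of_pos hK0 _
    have hnum : Real.sqrt (ρ k) * ρ k ≤ D * K ^ (-β) := by
      have hmono : Real.sqrt (ρ k) * ρ k ≤ Real.sqrt (C₀ * K ^ (-α)) * (C₀ * K ^ (-α)) := by
        have := hbound k
        have h2 : Real.sqrt (ρ k) ≤ Real.sqrt (C₀ * K ^ (-α)) := Real.sqrt_le_sqrt this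
        exact mul_le_mul h2 this h1 (Real.sqrt_nonneg _)
      have hsq : Real.sqrt (C₀ * K ^ (-α)) = Real.sqrt C₀ * K ^ (-(α/2)) := by
        rw [Real.sqrt_mul hC₀.le, Real.sqrt_eq_rpow (K ^ (-α)), ← Real.rpow_mul hK0.le]
        ring_nf
      calc Real.sqrt (ρ k) * ρ k ≤ Real.sqrt (C₀ * K ^ (-α)) * (C₀ * K ^ (-α)) := hmono
        _ = D * (K ^ (-(α/2)) * K ^ (-α)) := by rw [hsq, hD]; ring
        _ = D * K ^ (-β) := by
            rw [← Real.rpow_add hK0, hβdef]; congr 2; ring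
    have hden : lam^2 ≤ (ρ k + lam)^2 := by nlinarith
    calc Real.sqrt (ρ k) * ρ k / (ρ k + lam)^2 ≤ (D * K ^ (-β)) / lam^2 := by
          apply div_le_div₀ (by positivity) hnum (by positivity) hden
      _ = D * K ^ (-β) / lam^2 := rfl
  have hlam2 : lam ^ ((-2:ℝ)) = (lam^2)⁻¹ := by
    rw [Real.rpow_neg hlam.le, show ((2:ℝ)) = ((2:ℕ):ℝ) by norm_num, Real.rpow_natCast]
  rcases le_or_gt lam 1 with hl1 | hl1
  · -- small lam : head/tail split
    set T : ℝ := lam ^ (-α⁻¹) with hT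
    have hT0 : 0 < T := Real.rpow_pos_of_pos hlam _
    have hT1 : (1:ℝ) ≤ T := by
      apply Real.one_le_rpow_of_pos_of_le_one_of_nonpos hlam hl1
      exact neg_nonpos.mpr (by positivity)
    set m : ℕ := min (Nat.floor T) n with hm
    have hfl1 : 1 ≤ Nat.floor T := Nat.le_floor (by exact_mod_cast hT1)
    have hm1 : 1 ≤ m := le_min hfl1 hn
    have hmT : (m:ℝ) ≤ T := by
      calc (m:ℝ) ≤ (Nat.floor T : ℝ) := by exact_mod_cast min_le_left _ _
        _ ≤ T := Nat.floor_le hT0.le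
    have hsplit := Finset.sum_filter_add_sum_filter_not Finset.univ
      (fun k : Fin n => (k:ℕ) < m) (fun k => Real.sqrt (ρ k) * ρ k / (ρ k + lam)^2)
    -- head
    have hcard : (Finset.univ.filter (fun k : Fin n => (k:ℕ) < m)).card ≤ m := by
      have := Finset.card_le_card_of_injOn
        (s := Finset.univ.filter (fun k : Fin n => (k:ℕ) < m)) (t := Finset.range m)
        (fun k : Fin n => (k:ℕ))
        (fun a ha => Finset.mem_range.2 (Finset.mem_filter.1 ha).2)
        (fun a _ b _ h => Fin.ext h)
      simpa using this
    have hhead : ∑ k ∈ Finset.univ.filter (fun k : Fin n => (k:ℕ) < m),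
        Real.sqrt (ρ k) * ρ k / (ρ k + lam)^2 ≤ L := by
      have hb : ∀ k ∈ Finset.univ.filter (fun k : Fin n => (k:ℕ) < m),
          Real.sqrt (ρ k) * ρ k / (ρ k + lam)^2 ≤ lam ^ (-(1/2):ℝ) := fun k _ => F1 k
      have h2 := Finset.sum_le_card_nsmul _ _ _ hb
      rw [nsmul_eq_mul] at h2
      have h3 : ((Finset.univ.filter (fun k : Fin n => (k:ℕ) < m)).card : ℝ) * lam ^ (-(1/2):ℝ)
          ≤ T * lam ^ (-(1/2):ℝ) := by
        apply mul_le_mul_of_nonneg_right _ (Real.rpow_nonneg hlam.le _)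
        calc ((Finset.univ.filter (fun k : Fin n => (k:ℕ) < m)).card : ℝ)
            ≤ (m:ℝ) := by exact_mod_cast hcard
          _ ≤ T := hmT
      have h4 : T * lam ^ (-(1/2):ℝ) = L := by
        rw [hT, hL, ← Real.rpow_add hlam]
        congr 1
        rw [one_div]
        ring
      linarith
    -- tail
    have htail : ∑ k ∈ Finset.univ.filter (fun k : Fin n => ¬((k:ℕ) < m)),
        Real.sqrt (ρ k) * ρ k / (ρ k + lam)^2 ≤ D*(2:ℝ)^(β-1)/(β-1) * L := by
      rcases le_or_gt n (Nat.floor T) with hcase | hcase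
      · have hmn : m = n := min_eq_right hcase
        have hempty : Finset.univ.filter (fun k : Fin n => ¬((k:ℕ) < m)) = ∅ := by
          apply Finset.filter_eq_empty_iff.2
          intro k _
          simp only [not_not, hmn]
          exact k.isLt
        rw [hempty]
        simp
        have := div_pos (mul_pos hD0 hb2) hb0
        positivity
      · have hmfl : m = Nat.floor T := min_eq_left (le_of_lt hcase)
        have step1 : ∑ k ∈ Finset.univ.filter (fun k : Fin n => ¬((k:ℕ) < m)),
            Real.sqrt (ρ k) * ρ k / (ρ k + lam)^2
            ≤ ∑ k ∈ Finset.univ.filter (fun k : Fin n => ¬((k:ℕ) < m)),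
              D * (((k:ℕ):ℝ)+1) ^ (-β) / lam^2 := Finset.sum_le_sum (fun k _ => F2 k)
        have step2 : ∑ k ∈ Finset.univ.filter (fun k : Fin n => ¬((k:ℕ) < m)),
            D * (((k:ℕ):ℝ)+1) ^ (-β) / lam^2
            ≤ D / lam^2 * ((m:ℝ) ^ (1-β) / (β-1)) := by
          have himage : ∑ k ∈ Finset.univ.filter (fun k : Fin n => ¬((k:ℕ) < m)),
              (((k:ℕ):ℝ)+1) ^ (-β) ≤ ∑ j ∈ Finset.Ico m n, ((j:ℝ)+1) ^ (-β) := by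
            have himg_eq : ∑ k ∈ Finset.univ.filter (fun k : Fin n => ¬((k:ℕ) < m)),
                (((k:ℕ):ℝ)+1) ^ (-β)
                = ∑ j ∈ (Finset.univ.filter (fun k : Fin n => ¬((k:ℕ) < m))).image
                    (fun k : Fin n => (k:ℕ)), ((j:ℝ)+1) ^ (-β) :=
              (Finset.sum_image (s := Finset.univ.filter (fun k : Fin n => ¬((k:ℕ) < m)))
                (f := fun j : ℕ => ((j:ℝ)+1) ^ (-β)) (g := fun k : Fin n => (k:ℕ))
                (fun a _ b _ h => Fin.ext h)).symm
            rw [himg_eq]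
            apply Finset.sum_le_sum_of_subset_of_nonneg
            · intro j hj
              rw [Finset.mem_image] at hj
              obtain ⟨k, hk, rfl⟩ := hj
              rw [Finset.mem_filter] at hk
              rw [Finset.mem_Ico]
              exact ⟨Nat.le_of_not_lt hk.2, k.isLt⟩
            · intro j _ _
              positivity
          have htsum := aux_tailsum hβ m n hm1
          calc ∑ k ∈ Finset.univ.filter (fun k : Fin n => ¬((k:ℕ) < m)),
              D * (((k:ℕ):ℝ)+1) ^ (-β) / lam^2
              = D / lam^2 * ∑ k ∈ Finset.univ.filter (fun k : Fin n => ¬((k:ℕ) < m)),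
                (((k:ℕ):ℝ)+1) ^ (-β) := by
                rw [Finset.mul_sum]
                apply Finset.sum_congr rfl
                intro k _
                ring
            _ ≤ D / lam^2 * ((m:ℝ) ^ (1-β) / (β-1)) := by
                apply mul_le_mul_of_nonneg_left _ (by positivity)
                exact le_trans himage htsum
        have hTm : T/2 ≤ (m:ℝ) := by
          have hfloor := Nat.lt_floor_add_one T
          have hfl1' : (1:ℝ) ≤ (Nat.floor T : ℝ) := by exact_mod_cast hfl1
          rw [hmfl]
          linarith
        have hmb : (m:ℝ) ^ (1-β) ≤ (T/2) ^ (1-β) :=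
          Real.rpow_le_rpow_of_nonpos (by linarith) hTm (by linarith)
        have hTb : (T/2) ^ (1-β) = T ^ (1-β) * (2:ℝ)^(β-1) := by
          rw [Real.div_rpow hT0.le (by norm_num : (0:ℝ) ≤ 2), div_eq_mul_inv,
            ← Real.rpow_neg (by norm_num : (0:ℝ) ≤ 2), neg_sub]
        have hTlam : T ^ (1-β) / lam^2 = L := by
          rw [hT, ← Real.rpow_natCast lam 2, ← Real.rpow_mul hlam.le, div_eq_mul_inv,
            ← Real.rpow_neg hlam.le, ← Real.rpow_add hlam, hL]
          congr 1
          push_cast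
          rw [hβdef]
          field_simp
          ring
        calc ∑ k ∈ Finset.univ.filter (fun k : Fin n => ¬((k:ℕ) < m)),
            Real.sqrt (ρ k) * ρ k / (ρ k + lam)^2
            ≤ D / lam^2 * ((m:ℝ) ^ (1-β) / (β-1)) := le_trans step1 step2
          _ ≤ D / lam^2 * ((T/2) ^ (1-β) / (β-1)) := by
              apply mul_le_mul_of_nonneg_left _ (by positivity)
              gcongr
          _ = D*(2:ℝ)^(β-1)/(β-1) * (T ^ (1-β) / lam^2) := by rw [hTb]; ring
          _ = D*(2:ℝ)^(β-1)/(β-1) * L := by rw [hTlam]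
    calc ∑ k, Real.sqrt (ρ k) * ρ k / (ρ k + lam)^2
        = (∑ k ∈ Finset.univ.filter (fun k : Fin n => (k:ℕ) < m),
            Real.sqrt (ρ k) * ρ k / (ρ k + lam)^2)
          + ∑ k ∈ Finset.univ.filter (fun k : Fin n => ¬((k:ℕ) < m)),
            Real.sqrt (ρ k) * ρ k / (ρ k + lam)^2 := hsplit.symm
      _ ≤ L + D*(2:ℝ)^(β-1)/(β-1) * L := by linarith
      _ ≤ (D*(1+1/(β-1)) + (1 + D*(2:ℝ)^(β-1)/(β-1))) * L := by
          have hrw : (D*(1+1/(β-1)) + (1 + D*(2:ℝ)^(β-1)/(β-1))) * L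
              = D*(1+1/(β-1))*L + (L + D*(2:ℝ)^(β-1)/(β-1) * L) := by ring
          rw [hrw]
          have := mul_nonneg hbig1.le hL0.le
          linarith
  · -- large lam
    have hsum : ∑ k : Fin n, (((k:ℕ):ℝ)+1) ^ (-β) ≤ 1 + 1/(β-1) := by
      have := Fin.sum_univ_eq_sum_range (fun j : ℕ => ((j:ℝ)+1) ^ (-β)) n
      rw [this, Finset.range_eq_Ico,
        ← Finset.sum_Ico_consecutive _ (Nat.zero_le 1) hn]
      have h01 : ∑ j ∈ Finset.Ico (0:ℕ) 1, (((j:ℕ):ℝ)+1) ^ (-β) = 1 := by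
        rw [← Finset.range_eq_Ico, Finset.sum_range_one]
        norm_num
      have htail := aux_tailsum hβ 1 n le_rfl
      rw [h01]
      simp only [Nat.cast_one, Real.one_rpow] at htail
      linarith
    have hstep : ∑ k, Real.sqrt (ρ k) * ρ k / (ρ k + lam)^2
        ≤ D / lam^2 * (1 + 1/(β-1)) := by
      calc ∑ k, Real.sqrt (ρ k) * ρ k / (ρ k + lam)^2
          ≤ ∑ k : Fin n, D * (((k:ℕ):ℝ)+1) ^ (-β) / lam^2 := Finset.sum_le_sum (fun k _ => F2 k)
        _ = D / lam^2 * ∑ k : Fin n, (((k:ℕ):ℝ)+1) ^ (-β) := by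
            rw [Finset.mul_sum]
            apply Finset.sum_congr rfl
            intro k _
            ring
        _ ≤ D / lam^2 * (1 + 1/(β-1)) := by
            apply mul_le_mul_of_nonneg_left hsum (by positivity)

    have hpow : (lam^2)⁻¹ ≤ L := by
      rw [← hlam2, hL]
      apply Real.rpow_le_rpow_of_exponent_le hl1.le
      have h1α : 1/α ≤ 1 := by
        rw [div_le_one hα0]
        linarith
      linarith
    calc ∑ k, Real.sqrt (ρ k) * ρ k / (ρ k + lam)^2
        ≤ D / lam^2 * (1 + 1/(β-1)) := hstep
      _ = D * (1 + 1/(β-1)) * (lam^2)⁻¹ := by ring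
      _ ≤ D * (1 + 1/(β-1)) * L := by
          apply mul_le_mul_of_nonneg_left hpow hbig1.le
      _ ≤ (D*(1+1/(β-1)) + (1 + D*(2:ℝ)^(β-1)/(β-1))) * L := by
          have hrw : (D*(1+1/(β-1)) + (1 + D*(2:ℝ)^(β-1)/(β-1))) * L
              = D*(1+1/(β-1))*L + (1 + D*(2:ℝ)^(β-1)/(β-1)) * L := by ring
          rw [hrw]
          have := mul_nonneg hbig2.le hL0.le
          linarith


lemma quad_coeff_zero {Qc L : ℝ} (hQ : 0 < Qc) (h : ∀ t : ℝ, 0 ≤ Qc * t^2 + L * t) : L = 0 := by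
  have h1 := h (-(L/(2*Qc)))
  have h2 : Qc * (-(L/(2*Qc)))^2 + L * (-(L/(2*Qc))) = -(L^2/(4*Qc)) := by
    field_simp
    ring
  rw [h2] at h1
  have h3 : L^2/(4*Qc) ≤ 0 := by linarith
  have h4 : L^2 ≤ 0 := by
    by_contra hc
    push_neg at hc
    have : 0 < L^2/(4*Qc) := div_pos hc (by linarith)
    linarith
  have : L^2 = 0 := le_antisymm h4 (sq_nonneg L)
  exact pow_eq_zero_iff (by norm_num) |>.1 this

lemma symm_dot {n : ℕ} {M : Matrix (Fin n) (Fin n) ℝ} (h : Mᵀ = M) (a b : Fin n → ℝ) :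
    a ⬝ᵥ M *ᵥ b = b ⬝ᵥ M *ᵥ a := by
  rw [Matrix.dotProduct_mulVec, ← Matrix.mulVec_transpose, h, dotProduct_comm]

lemma gram_dot {n : ℕ} (A : Matrix (Fin n) (Fin n) ℝ) (x y : Fin n → ℝ) :
    (A *ᵥ x) ⬝ᵥ (A *ᵥ y) = x ⬝ᵥ ((Aᵀ*A) *ᵥ y) := by
  rw [← Matrix.mulVec_mulVec, Matrix.dotProduct_mulVec x Aᵀ, Matrix.vecMul_transpose]

lemma key_coeff {n : ℕ} (A W : Matrix (Fin n) (Fin n) ℝ) (hWsym : Wᵀ = W)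
    (ρ : Fin n → ℝ) (ψ : Fin n → Fin n → ℝ)
    (heig : ∀ k, (Aᵀ*A) *ᵥ ψ k = ρ k • W *ᵥ ψ k)
    (horth : ∀ i j, ψ i ⬝ᵥ W *ᵥ ψ j = if i = j then 1 else 0)
    (hρ : ∀ k, 0 ≤ ρ k) (lam : ℝ) (hlam : 0 < lam)
    (xstar xl ε : Fin n → ℝ)
    (hmin : ∀ x, (A *ᵥ xl - (A *ᵥ xstar + ε)) ⬝ᵥ (A *ᵥ xl - (A *ᵥ xstar + ε))
        + lam * (xl ⬝ᵥ W *ᵥ xl)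
      ≤ (A *ᵥ x - (A *ᵥ xstar + ε)) ⬝ᵥ (A *ᵥ x - (A *ᵥ xstar + ε)) + lam * (x ⬝ᵥ W *ᵥ x))
    (k : Fin n) :
    ψ k ⬝ᵥ W *ᵥ (xl - xstar)
      = ((A *ᵥ ψ k) ⬝ᵥ ε - lam * (ψ k ⬝ᵥ W *ᵥ xstar)) / (ρ k + lam) := by
  have hATA : (Aᵀ*A)ᵀ = Aᵀ*A := by
    rw [Matrix.transpose_mul, Matrix.transpose_transpose]
  have hAdot : ∀ v : Fin n → ℝ, (A *ᵥ ψ k) ⬝ᵥ (A *ᵥ v) = ρ k * (ψ k ⬝ᵥ W *ᵥ v) := by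
    intro v
    rw [gram_dot, symm_dot hATA, heig k, dotProduct_smul, smul_eq_mul, symm_dot hWsym]
  have huu : (A *ᵥ ψ k) ⬝ᵥ (A *ᵥ ψ k) = ρ k := by
    rw [hAdot, horth k k]
    simp
  have hpsik : ψ k ⬝ᵥ W *ᵥ ψ k = 1 := by rw [horth k k]; simp
  set b : Fin n → ℝ := A *ᵥ xstar + ε with hb
  set r : Fin n → ℝ := A *ᵥ xl - b with hr
  set u : Fin n → ℝ := A *ᵥ ψ k with hu
  set L : ℝ := 2 * (u ⬝ᵥ r) + 2 * lam * (ψ k ⬝ᵥ W *ᵥ xl) with hLdef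
  have hquad : ∀ t : ℝ, 0 ≤ (ρ k + lam) * t^2 + L * t := by
    intro t
    have h := hmin (xl + t • ψ k)
    have e1 : A *ᵥ (xl + t • ψ k) - b = r + t • u := by
      rw [Matrix.mulVec_add, Matrix.mulVec_smul, hr]
      abel
    rw [e1] at h
    have e2 : (r + t • u) ⬝ᵥ (r + t • u)
        = r ⬝ᵥ r + 2 * t * (u ⬝ᵥ r) + t^2 * (u ⬝ᵥ u) := by
      simp only [dotProduct_add, add_dotProduct, dotProduct_smul,
        smul_dotProduct, smul_eq_mul, dotProduct_comm r u]
      ring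
    have e3 : (xl + t • ψ k) ⬝ᵥ W *ᵥ (xl + t • ψ k)
        = xl ⬝ᵥ W *ᵥ xl + 2 * t * (ψ k ⬝ᵥ W *ᵥ xl) + t^2 * (ψ k ⬝ᵥ W *ᵥ ψ k) := by
      rw [Matrix.mulVec_add, Matrix.mulVec_smul]
      simp only [dotProduct_add, add_dotProduct, dotProduct_smul,
        smul_dotProduct, smul_eq_mul, symm_dot hWsym xl (ψ k)]
      ring
    rw [e2, e3, huu, hpsik] at h
    rw [hLdef]
    nlinarith [h]
  have hQpos : 0 < ρ k + lam := by have := hρ k; linarith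
  have hL0 : L = 0 := quad_coeff_zero hQpos hquad
  have hur : u ⬝ᵥ r = ρ k * (ψ k ⬝ᵥ W *ᵥ xl) - ρ k * (ψ k ⬝ᵥ W *ᵥ xstar) - u ⬝ᵥ ε := by
    rw [hr, hb]
    rw [dotProduct_sub, dotProduct_add, hu, hAdot, hAdot]
    ring
  have hd : ψ k ⬝ᵥ W *ᵥ (xl - xstar) = ψ k ⬝ᵥ W *ᵥ xl - ψ k ⬝ᵥ W *ᵥ xstar := by
    rw [Matrix.mulVec_sub, dotProduct_sub]
  rw [eq_div_iff hQpos.ne']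
  rw [hLdef, hur] at hL0
  rw [hd]
  linear_combination hL0 / 2


lemma dot_self_nonneg {n : ℕ} (v : Fin n → ℝ) : 0 ≤ v ⬝ᵥ v :=
  Finset.sum_nonneg fun i _ => mul_self_nonneg _

lemma dot_sum_right {n m : ℕ} (v : Fin n → ℝ) (f : Fin m → Fin n → ℝ) :
    v ⬝ᵥ (∑ k, f k) = ∑ k, v ⬝ᵥ f k := by
  unfold dotProduct
  simp only [Finset.sum_apply, Finset.mul_sum]
  exact Finset.sum_comm

lemma sum_dot_left {n m : ℕ} (v : Fin n → ℝ) (f : Fin m → Fin n → ℝ) :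
    (∑ k, f k) ⬝ᵥ v = ∑ k, f k ⬝ᵥ v := by
  unfold dotProduct
  simp only [Finset.sum_apply, Finset.sum_mul]
  exact Finset.sum_comm

lemma mulVec_sum' {n m : ℕ} (M : Matrix (Fin n) (Fin n) ℝ) (f : Fin m → Fin n → ℝ) :
    M *ᵥ (∑ k, f k) = ∑ k, M *ᵥ f k := by
  funext i
  rw [Finset.sum_apply]
  exact dot_sum_right _ _

lemma hermitian_transpose {n : ℕ} {M : Matrix (Fin n) (Fin n) ℝ} (h : M.IsHermitian) :
    Mᵀ = M := by
  have := h
  rwa [Matrix.IsHermitian, Matrix.conjTranspose_eq_transpose_of_trivial] at this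

lemma weak_norm_formula {n : ℕ} (A W Wsqrt Q : Matrix (Fin n) (Fin n) ℝ)
    (hWsqrt : Wsqrt.PosDef) (hWs2 : Wsqrt * Wsqrt = W)
    (hQ : Q.PosSemidef) (hQ4 : Q^4 = Wsqrt⁻¹ * (Aᵀ*A) * Wsqrt⁻¹)
    (ρ : Fin n → ℝ) (ψ : Fin n → Fin n → ℝ) (hρ : ∀ k, 0 ≤ ρ k)
    (heig : ∀ k, (Aᵀ*A) *ᵥ ψ k = ρ k • W *ᵥ ψ k)
    (horth : ∀ i j, ψ i ⬝ᵥ W *ᵥ ψ j = if i = j then 1 else 0)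
    (v : Fin n → ℝ) (hv : v = ∑ k, (ψ k ⬝ᵥ W *ᵥ v) • ψ k) :
    ((Q*Wsqrt) *ᵥ v) ⬝ᵥ ((Q*Wsqrt) *ᵥ v)
      = ∑ k, Real.sqrt (ρ k) * (ψ k ⬝ᵥ W *ᵥ v)^2 := by
  have hWssym : Wsqrtᵀ = Wsqrt := hermitian_transpose hWsqrt.posSemidef.isHermitian
  have hQsym : Qᵀ = Q := hermitian_transpose hQ.isHermitian
  have hdet : IsUnit Wsqrt.det := isUnit_iff_ne_zero.2 hWsqrt.det_pos.ne'
  have hinv : Wsqrt⁻¹ * Wsqrt = Wsqrt * Wsqrt⁻¹ := by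
    rw [Matrix.nonsing_inv_mul _ hdet, Matrix.mul_nonsing_inv _ hdet]
  have hinv1 : Wsqrt⁻¹ * Wsqrt = 1 := Matrix.nonsing_inv_mul _ hdet
  set u : Fin n → Fin n → ℝ := fun k => Wsqrt *ᵥ ψ k with hu
  have huorth : ∀ i j, u i ⬝ᵥ u j = if i = j then 1 else 0 := by
    intro i j
    rw [hu]
    rw [gram_dot, hWssym, hWs2]
    exact horth i j
  have hQ4u : ∀ k, (Q^4) *ᵥ u k = ρ k • u k := by
    intro k
    rw [hQ4, hu]
    rw [Matrix.mulVec_mulVec]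
    have hm : Wsqrt⁻¹ * (Aᵀ*A) * Wsqrt⁻¹ * Wsqrt = Wsqrt⁻¹ * (Aᵀ*A) := by
      rw [Matrix.mul_assoc (Wsqrt⁻¹ * (Aᵀ*A)), hinv1, Matrix.mul_one]
    rw [hm, ← Matrix.mulVec_mulVec, heig k, Matrix.mulVec_smul, Matrix.mulVec_mulVec]
    have hm2 : Wsqrt⁻¹ * W = Wsqrt := by
      rw [← hWs2, ← Matrix.mul_assoc, hinv1, Matrix.one_mul]
    rw [hm2]
  set M : Matrix (Fin n) (Fin n) ℝ := Q * Q with hM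
  have hMsym : Mᵀ = M := by rw [hM, Matrix.transpose_mul, hQsym]
  have hMM : M * M = Q^4 := by rw [hM, show (4:ℕ) = 2+2 from rfl, pow_add, pow_two]
  have hMpsd : ∀ w : Fin n → ℝ, 0 ≤ w ⬝ᵥ M *ᵥ w := by
    intro w
    have : M = Qᵀ * Q := by rw [hQsym, hM]
    rw [this, ← gram_dot]
    exact dot_self_nonneg _
  have hMu : ∀ k, M *ᵥ u k = Real.sqrt (ρ k) • u k := by
    intro k
    set s : ℝ := Real.sqrt (ρ k) with hs
    have hs2 : s * s = ρ k := Real.mul_self_sqrt (hρ k)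
    have hs0 : 0 ≤ s := Real.sqrt_nonneg _
    set w : Fin n → ℝ := M *ᵥ u k - s • u k with hw
    have hMMu : M *ᵥ (M *ᵥ u k) = ρ k • u k := by
      rw [Matrix.mulVec_mulVec, hMM]
      exact hQ4u k
    have hkey : M *ᵥ w + s • w = 0 := by
      rw [hw, Matrix.mulVec_sub, Matrix.mulVec_smul, hMMu, smul_sub, smul_smul, hs2]
      abel
    have hdot : w ⬝ᵥ (M *ᵥ w) + s * (w ⬝ᵥ w) = 0 := by
      have h0 : w ⬝ᵥ (M *ᵥ w + s • w) = 0 := by rw [hkey, dotProduct_zero]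
      rw [dotProduct_add, dotProduct_smul, smul_eq_mul] at h0
      exact h0
    have hww : w ⬝ᵥ w = 0 := by
      rcases eq_or_lt_of_le (hρ k) with hz | hpos
      · -- ρ k = 0, s = 0, w = M *ᵥ u k
        have hsz : s = 0 := by rw [hs, ← hz, Real.sqrt_zero]
        have hwMu : w = M *ᵥ u k := by rw [hw, hsz, zero_smul, sub_zero]
        rw [hwMu, gram_dot M (u k) (u k), hMsym, hMM, hQ4u k, dotProduct_smul,
          smul_eq_mul, ← hz]
        ring
      · have hspos : 0 < s := Real.sqrt_pos.2 hpos
        have h1 := hMpsd w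
        have h2 := dot_self_nonneg w
        nlinarith [hdot]
    have : w = 0 := dotProduct_self_eq_zero.1 hww
    rw [hw, sub_eq_zero] at this
    exact this
  -- expansion
  set c : Fin n → ℝ := fun k => ψ k ⬝ᵥ W *ᵥ v with hc
  have hzsum : Wsqrt *ᵥ v = ∑ k, c k • u k := by
    conv_lhs => rw [hv]
    rw [show (∑ k, c k • ψ k) = ∑ k, (fun k => c k • ψ k) k from rfl, mulVec_sum']
    apply Finset.sum_congr rfl
    intro k _
    rw [Matrix.mulVec_smul, hu]
  have hMz : M *ᵥ (Wsqrt *ᵥ v) = ∑ k, (c k * Real.sqrt (ρ k)) • u k := by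
    rw [hzsum, mulVec_sum']
    apply Finset.sum_congr rfl
    intro k _
    rw [Matrix.mulVec_smul, hMu k, smul_smul]
  calc ((Q*Wsqrt) *ᵥ v) ⬝ᵥ ((Q*Wsqrt) *ᵥ v)
      = (Q *ᵥ (Wsqrt *ᵥ v)) ⬝ᵥ (Q *ᵥ (Wsqrt *ᵥ v)) := by
        rw [Matrix.mulVec_mulVec]
    _ = (Wsqrt *ᵥ v) ⬝ᵥ ((Qᵀ*Q) *ᵥ (Wsqrt *ᵥ v)) := gram_dot Q _ _
    _ = (Wsqrt *ᵥ v) ⬝ᵥ (M *ᵥ (Wsqrt *ᵥ v)) := by rw [hQsym, hM]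
    _ = ∑ j, ∑ k, (c j * (c k * Real.sqrt (ρ k))) * (u j ⬝ᵥ u k) := by
        rw [hMz, hzsum, sum_dot_left]
        apply Finset.sum_congr rfl
        intro j _
        rw [smul_dotProduct, dot_sum_right, Finset.smul_sum]
        apply Finset.sum_congr rfl
        intro k _
        rw [dotProduct_smul]
        simp only [smul_eq_mul]
        ring
    _ = ∑ k, Real.sqrt (ρ k) * (c k)^2 := by
        apply Finset.sum_congr rfl
        intro j _
        rw [Finset.sum_eq_single j]
        · rw [huorth j j, if_pos rfl, mul_one]
          ring
        · intro k _ hkj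
          rw [huorth j k, if_neg (fun h => hkj h.symm), mul_zero]
        · intro h
          exact absurd (Finset.mem_univ j) h


lemma noise_moment {Ω : Type} [MeasureSpace Ω] (hprob : IsProbabilityMeasure (ℙ : Measure Ω))
    {n : ℕ} (e : Fin n → Ω → ℝ) (σ : ℝ)
    (hind : iIndepFun e ℙ)
    (hL2 : ∀ i, MemLp (e i) 2 ℙ)
    (hmean : ∀ i, ∫ ω, e i ω ∂ℙ = 0)
    (hvar : ∀ i, ∫ ω, (e i ω)^2 ∂ℙ ≤ σ^2)
    (g : Fin n → ℝ) (c : ℝ) :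
    Integrable (fun ω => (g ⬝ᵥ (fun i => e i ω) - c)^2) ℙ ∧
    ∫ ω, (g ⬝ᵥ (fun i => e i ω) - c)^2 ∂ℙ ≤ σ^2 * (g ⬝ᵥ g) + c^2 := by
  have hInt : ∀ i, Integrable (e i) ℙ := fun i => (hL2 i).integrable one_le_two
  have hmul : ∀ i j, Integrable (fun ω => e i ω * e j ω) ℙ := by
    intro i j
    rcases eq_or_ne i j with rfl | hij
    · simpa [sq] using (hL2 i).integrable_sq
    · exact (hind.indepFun hij).integrable_mul (hInt i) (hInt j)
  have hcross : ∀ i j, i ≠ j → ∫ ω, e i ω * e j ω ∂ℙ = 0 := by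
    intro i j hij
    have := (hind.indepFun hij).integral_mul_eq_mul_integral (hL2 i).aestronglyMeasurable
      (hL2 j).aestronglyMeasurable
    simp only [Pi.mul_apply] at this
    rw [this, hmean i, hmean j, mul_zero]
  -- ε and its square
  have hIntε : Integrable (fun ω => g ⬝ᵥ (fun i => e i ω)) ℙ := by
    have : (fun ω => g ⬝ᵥ (fun i => e i ω)) = fun ω => ∑ i, g i * e i ω := rfl
    rw [this]
    exact integrable_finset_sum _ (fun i _ => (hInt i).const_mul (g i))
  have hmeanε : ∫ ω, g ⬝ᵥ (fun i => e i ω) ∂ℙ = 0 := by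
    have : (fun ω => g ⬝ᵥ (fun i => e i ω)) = fun ω => ∑ i, g i * e i ω := rfl
    rw [this, integral_finset_sum _ (fun i _ => (hInt i).const_mul (g i))]
    apply Finset.sum_eq_zero
    intro i _
    rw [integral_const_mul, hmean i, mul_zero]
  have hexp : ∀ ω : Ω, (g ⬝ᵥ (fun i => e i ω))^2
      = ∑ i, ∑ j, (g i * g j) * (e i ω * e j ω) := by
    intro ω
    rw [sq]
    rw [show (g ⬝ᵥ (fun i => e i ω)) = ∑ i, g i * e i ω from rfl, Finset.sum_mul_sum]
    apply Finset.sum_congr rfl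
    intro i _
    apply Finset.sum_congr rfl
    intro j _
    ring
  have hIntε2 : Integrable (fun ω => (g ⬝ᵥ (fun i => e i ω))^2) ℙ := by
    have : (fun ω => (g ⬝ᵥ (fun i => e i ω))^2)
        = fun ω => ∑ i, ∑ j, (g i * g j) * (e i ω * e j ω) := funext hexp
    rw [this]
    exact integrable_finset_sum _ (fun i _ =>
      integrable_finset_sum _ (fun j _ => (hmul i j).const_mul _))
  have hvarε : ∫ ω, (g ⬝ᵥ (fun i => e i ω))^2 ∂ℙ ≤ σ^2 * (g ⬝ᵥ g) := by
    have h1 : ∫ ω, (g ⬝ᵥ (fun i => e i ω))^2 ∂ℙ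
        = ∑ i, ∑ j, (g i * g j) * ∫ ω, e i ω * e j ω ∂ℙ := by
      rw [show (fun ω => (g ⬝ᵥ (fun i => e i ω))^2)
        = fun ω => ∑ i, ∑ j, (g i * g j) * (e i ω * e j ω) from funext hexp]
      rw [integral_finset_sum _ (fun i _ =>
        integrable_finset_sum _ (fun j _ => (hmul i j).const_mul _))]
      apply Finset.sum_congr rfl
      intro i _
      rw [integral_finset_sum _ (fun j _ => (hmul i j).const_mul _)]
      apply Finset.sum_congr rfl
      intro j _
      rw [integral_const_mul]
    rw [h1]
    have h2 : ∀ i : Fin n, ∑ j, (g i * g j) * ∫ ω, e i ω * e j ω ∂ℙ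
        ≤ (g i * g i) * σ^2 := by
      intro i
      rw [Finset.sum_eq_single i]
      · have hgg : 0 ≤ g i * g i := mul_self_nonneg _
        have hsq : ∫ ω, e i ω * e i ω ∂ℙ ≤ σ^2 := by simpa [sq] using hvar i
        exact mul_le_mul_of_nonneg_left hsq hgg
      · intro j _ hji
        rw [hcross i j (fun h => hji h.symm), mul_zero]
      · intro h
        exact absurd (Finset.mem_univ i) h
    calc ∑ i, ∑ j, (g i * g j) * ∫ ω, e i ω * e j ω ∂ℙ
        ≤ ∑ i, (g i * g i) * σ^2 := Finset.sum_le_sum (fun i _ => h2 i)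
      _ = σ^2 * (g ⬝ᵥ g) := by
          rw [show g ⬝ᵥ g = ∑ i, g i * g i from rfl, Finset.mul_sum]
          apply Finset.sum_congr rfl
          intro i _
          ring
  -- expand (ε - c)^2
  have hsplit : (fun ω => (g ⬝ᵥ (fun i => e i ω) - c)^2)
      = fun ω => (g ⬝ᵥ (fun i => e i ω))^2 - (2*c) * (g ⬝ᵥ (fun i => e i ω)) + c^2 := by
    funext ω
    ring
  have hIntTot : Integrable (fun ω => (g ⬝ᵥ (fun i => e i ω) - c)^2) ℙ := by
    rw [hsplit]
    exact ((hIntε2.sub (hIntε.const_mul (2*c))).add (integrable_const _))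
  refine ⟨hIntTot, ?_⟩
  rw [hsplit]
  have hI1 : Integrable
      (fun ω => (g ⬝ᵥ (fun i => e i ω))^2 - (2*c) * (g ⬝ᵥ (fun i => e i ω))) ℙ :=
    hIntε2.sub (hIntε.const_mul (2*c))
  rw [integral_add hI1 (integrable_const _),
    integral_sub hIntε2 (hIntε.const_mul (2*c)), integral_const_mul, hmeanε,
    integral_const]
  simp only [probReal_univ, measure_univ, ENNReal.toReal_one, smul_eq_mul, one_mul, mul_zero, sub_zero]
  linarith [hvarε]


lemma aux_bias {rp lam : ℝ} (hr : 0 ≤ rp) (hlam : 0 < lam) :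
    Real.sqrt rp * lam^2 / (rp+lam)^2 ≤ Real.sqrt lam / 2 := by
  rw [div_le_div_iff₀ (by positivity) (by norm_num : (0:ℝ) < 2)]
  have h1 : 2*(Real.sqrt rp * Real.sqrt lam) ≤ rp + lam := by
    nlinarith [sq_nonneg (Real.sqrt rp - Real.sqrt lam), Real.sq_sqrt hr, Real.sq_sqrt hlam.le]
  have h2 : 2*(Real.sqrt rp * Real.sqrt lam)*lam ≤ (rp+lam)^2 := by
    nlinarith [mul_le_mul_of_nonneg_right h1 hlam.le,
      mul_nonneg (by linarith : (0:ℝ) ≤ rp+lam) hr, hlam]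
  have hll : Real.sqrt lam * Real.sqrt lam = lam := Real.mul_self_sqrt hlam.le
  calc Real.sqrt rp * lam^2 * 2
      = (2*(Real.sqrt rp * Real.sqrt lam)*lam) * Real.sqrt lam := by
        linear_combination (-(2 * Real.sqrt rp * lam)) * hll
    _ ≤ (rp+lam)^2 * Real.sqrt lam := mul_le_mul_of_nonneg_right h2 (Real.sqrt_nonneg _)
    _ = Real.sqrt lam * (rp+lam)^2 := by ring


/-- Weak-norm expectation bound: with `B = (W^{-1/2}AᵀAW^{-1/2})^{1/4}W^{1/2}`,
`𝔼[(1/n)‖B(x_λ − x*)‖²] ≤ Cλ^{1/2}(1/n)‖x*‖_W² + Cσ²/(nλ^{1/2+1/α})`. -/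
theorem stmt11 (C₀ α : ℝ) (hC₀ : 0 < C₀) (hα : 1 < α) :
    ∃ C > (0 : ℝ),
      ∀ (Ω : Type) (_ : MeasureSpace Ω), IsProbabilityMeasure (ℙ : Measure Ω) →
      ∀ (n : ℕ), 0 < n →
      ∀ (A W : Matrix (Fin n) (Fin n) ℝ), W.PosDef →
      ∀ (ρ : Fin n → ℝ) (ψ : Fin n → (Fin n → ℝ)),
        (∀ k, 0 ≤ ρ k) →
        (∀ k, (Aᵀ * A).mulVec (ψ k) = ρ k • W.mulVec (ψ k)) →
        (∀ i j, ψ i ⬝ᵥ W.mulVec (ψ j) = if i = j then 1 else 0) →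
        (∀ v : Fin n → ℝ, v = ∑ k, (ψ k ⬝ᵥ W.mulVec v) • ψ k) →
        (∀ k : Fin n, ρ k ≤ C₀ * ((k : ℝ) + 1) ^ (-α)) →
      ∀ (Wsqrt : Matrix (Fin n) (Fin n) ℝ), Wsqrt.PosDef → Wsqrt * Wsqrt = W →
      ∀ (Q : Matrix (Fin n) (Fin n) ℝ), Q.PosSemidef →
        Q ^ 4 = Wsqrt⁻¹ * (Aᵀ * A) * Wsqrt⁻¹ →
      ∀ (e : Fin n → Ω → ℝ) (σ : ℝ), 0 ≤ σ →
        iIndepFun e ℙ →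
        (∀ i, MemLp (e i) 2 ℙ) →
        (∀ i, ∫ ω, e i ω ∂ℙ = 0) →
        (∀ i, ∫ ω, (e i ω) ^ 2 ∂ℙ ≤ σ ^ 2) →
      ∀ (lam : ℝ), 0 < lam →
      ∀ (xstar : Fin n → ℝ) (xlam : Ω → Fin n → ℝ),
        (∀ ω, ∀ x : Fin n → ℝ,
          (A.mulVec (xlam ω) - (A.mulVec xstar + fun i => e i ω)) ⬝ᵥ
              (A.mulVec (xlam ω) - (A.mulVec xstar + fun i => e i ω)) +
            lam * (xlam ω ⬝ᵥ W.mulVec (xlam ω)) ≤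
          (A.mulVec x - (A.mulVec xstar + fun i => e i ω)) ⬝ᵥ
              (A.mulVec x - (A.mulVec xstar + fun i => e i ω)) +
            lam * (x ⬝ᵥ W.mulVec x)) →
        ∫ ω, (1 / (n : ℝ)) *
            (((Q * Wsqrt).mulVec (xlam ω - xstar)) ⬝ᵥ ((Q * Wsqrt).mulVec (xlam ω - xstar))) ∂ℙ ≤
          C * lam ^ ((1 : ℝ) / 2) * ((1 / (n : ℝ)) * (xstar ⬝ᵥ W.mulVec xstar)) +
          C * σ ^ 2 / ((n : ℝ) * lam ^ (1 / 2 + 1 / α)) := by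

  obtain ⟨C₂, hC₂, hspec⟩ := aux_specsum C₀ α hC₀ hα
  refine ⟨C₂ + 1, by linarith, ?_⟩
  intro Ω _ hprob n hn A W hW ρ ψ hρ heig horth hcomp hdecay Wsqrt hWsqrt hWs2 Q hQ hQ4
    e σ hσ hind hL2 hmean hvar lam hlam xstar xlam hmin
  have hnR : (0:ℝ) < (n:ℝ) := by exact_mod_cast hn
  have hWsym : Wᵀ = W := hermitian_transpose hW.posSemidef.isHermitian
  set c : Fin n → ℝ := fun k => ψ k ⬝ᵥ W *ᵥ xstar with hc
  set G : Fin n → Fin n → ℝ := fun k => A *ᵥ ψ k with hG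
  have hGG : ∀ k, G k ⬝ᵥ G k = ρ k := by
    intro k
    rw [hG]
    rw [gram_dot, heig k, dotProduct_smul, smul_eq_mul, horth k k]
    simp
  have hptwise : ∀ ω, (1 / (n : ℝ)) *
      (((Q * Wsqrt) *ᵥ (xlam ω - xstar)) ⬝ᵥ ((Q * Wsqrt) *ᵥ (xlam ω - xstar)))
      = (1/(n:ℝ)) * ∑ k, (Real.sqrt (ρ k) / (ρ k + lam)^2)
          * ((G k ⬝ᵥ (fun i => e i ω)) - lam * c k)^2 := by
    intro ω
    congr 1
    rw [weak_norm_formula A W Wsqrt Q hWsqrt hWs2 hQ hQ4 ρ ψ hρ heig horth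
      (xlam ω - xstar) (hcomp _)]
    apply Finset.sum_congr rfl
    intro k _
    rw [key_coeff A W hWsym ρ ψ heig horth hρ lam hlam xstar (xlam ω)
      (fun i => e i ω) (hmin ω) k]
    rw [div_pow]
    ring
  have hint_k : ∀ k : Fin n,
      Integrable (fun ω => ((G k ⬝ᵥ (fun i => e i ω)) - lam * c k)^2) ℙ :=
    fun k => (noise_moment hprob e σ hind hL2 hmean hvar (G k) (lam * c k)).1
  have hbound_k : ∀ k : Fin n, ∫ ω, ((G k ⬝ᵥ (fun i => e i ω)) - lam * c k)^2 ∂ℙ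
      ≤ σ^2 * ρ k + lam^2 * (c k)^2 := by
    intro k
    have h := (noise_moment hprob e σ hind hL2 hmean hvar (G k) (lam * c k)).2
    rw [hGG k, mul_pow] at h
    exact h
  have hIop : ∫ ω, (1 / (n : ℝ)) *
      ((Q * Wsqrt).mulVec (xlam ω - xstar) ⬝ᵥ (Q * Wsqrt).mulVec (xlam ω - xstar)) ∂ℙ
      = (1/(n:ℝ)) * ∑ k, (Real.sqrt (ρ k) / (ρ k + lam)^2)
          * ∫ ω, ((G k ⬝ᵥ (fun i => e i ω)) - lam * c k)^2 ∂ℙ := by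
    rw [show (fun ω => (1 / (n : ℝ)) *
        ((Q * Wsqrt).mulVec (xlam ω - xstar) ⬝ᵥ (Q * Wsqrt).mulVec (xlam ω - xstar)))
        = fun ω => (1/(n:ℝ)) * ∑ k, (Real.sqrt (ρ k) / (ρ k + lam)^2)
            * ((G k ⬝ᵥ (fun i => e i ω)) - lam * c k)^2 from funext hptwise]
    rw [integral_const_mul]
    congr 1
    rw [integral_finset_sum _ (fun k _ => (hint_k k).const_mul _)]
    apply Finset.sum_congr rfl
    intro k _
    rw [integral_const_mul]
  rw [hIop]
  set X : ℝ := xstar ⬝ᵥ W *ᵥ xstar with hX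
  have hX0 : 0 ≤ X := by
    have := hW.posSemidef.dotProduct_mulVec_nonneg xstar
    simpa using this
  have hpars : ∑ k, (c k)^2 = X := by
    have h0 := congrArg (fun z => z ⬝ᵥ W *ᵥ xstar) (hcomp xstar)
    rw [hX]
    rw [show xstar ⬝ᵥ W *ᵥ xstar
        = (∑ k, (ψ k ⬝ᵥ W *ᵥ xstar) • ψ k) ⬝ᵥ W *ᵥ xstar from h0]
    rw [show (∑ k, (ψ k ⬝ᵥ W *ᵥ xstar) • ψ k)
        = ∑ k, (fun k => (ψ k ⬝ᵥ W *ᵥ xstar) • ψ k) k from rfl, sum_dot_left]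
    apply Finset.sum_congr rfl
    intro k _
    rw [smul_dotProduct, smul_eq_mul, hc]
    ring
  have hspec' := hspec lam hlam n hn ρ hρ hdecay
  have hsum1 : ∑ k, (Real.sqrt (ρ k) / (ρ k + lam)^2)
        * ∫ ω, ((G k ⬝ᵥ (fun i => e i ω)) - lam * c k)^2 ∂ℙ
      ≤ σ^2 * (C₂ * lam ^ (-(1/2 + 1/α))) + (Real.sqrt lam / 2) * X := by
    have step : ∀ k : Fin n, (Real.sqrt (ρ k) / (ρ k + lam)^2)
        * ∫ ω, ((G k ⬝ᵥ (fun i => e i ω)) - lam * c k)^2 ∂ℙ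
        ≤ σ^2 * (Real.sqrt (ρ k) * ρ k / (ρ k + lam)^2)
          + (Real.sqrt lam / 2) * (c k)^2 := by
      intro k
      have hcoef : 0 ≤ Real.sqrt (ρ k) / (ρ k + lam)^2 := by positivity
      calc (Real.sqrt (ρ k) / (ρ k + lam)^2)
          * ∫ ω, ((G k ⬝ᵥ (fun i => e i ω)) - lam * c k)^2 ∂ℙ
          ≤ (Real.sqrt (ρ k) / (ρ k + lam)^2) * (σ^2 * ρ k + lam^2 * (c k)^2) :=
            mul_le_mul_of_nonneg_left (hbound_k k) hcoef
        _ = σ^2 * (Real.sqrt (ρ k) * ρ k / (ρ k + lam)^2)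
            + (Real.sqrt (ρ k) * lam^2 / (ρ k + lam)^2) * (c k)^2 := by ring
        _ ≤ σ^2 * (Real.sqrt (ρ k) * ρ k / (ρ k + lam)^2)
            + (Real.sqrt lam / 2) * (c k)^2 := by
            have := mul_le_mul_of_nonneg_right (aux_bias (hρ k) hlam) (sq_nonneg (c k))
            linarith
    calc ∑ k, (Real.sqrt (ρ k) / (ρ k + lam)^2)
        * ∫ ω, ((G k ⬝ᵥ (fun i => e i ω)) - lam * c k)^2 ∂ℙ
        ≤ ∑ k, (σ^2 * (Real.sqrt (ρ k) * ρ k / (ρ k + lam)^2)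
            + (Real.sqrt lam / 2) * (c k)^2) := Finset.sum_le_sum (fun k _ => step k)
      _ = σ^2 * (∑ k, Real.sqrt (ρ k) * ρ k / (ρ k + lam)^2)
          + (Real.sqrt lam / 2) * ∑ k, (c k)^2 := by
          rw [Finset.sum_add_distrib, Finset.mul_sum, Finset.mul_sum]
      _ ≤ σ^2 * (C₂ * lam ^ (-(1/2 + 1/α))) + (Real.sqrt lam / 2) * X := by
          rw [hpars]
          have hσ2 : (0:ℝ) ≤ σ^2 := sq_nonneg σ
          have := mul_le_mul_of_nonneg_left hspec' hσ2
          linarith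
  -- final numeric comparison
  have hmono : (1/(n:ℝ)) * ∑ k, (Real.sqrt (ρ k) / (ρ k + lam)^2)
        * ∫ ω, ((G k ⬝ᵥ (fun i => e i ω)) - lam * c k)^2 ∂ℙ
      ≤ (1/(n:ℝ)) * (σ^2 * (C₂ * lam ^ (-(1/2 + 1/α))) + (Real.sqrt lam / 2) * X) :=
    mul_le_mul_of_nonneg_left hsum1 (by positivity)
  refine le_trans hmono ?_
  have hp0 : (0:ℝ) < lam ^ ((1:ℝ)/2 + 1/α) := Real.rpow_pos_of_pos hlam _
  have hneg : lam ^ (-(1/2 + 1/α) : ℝ) = (lam ^ ((1:ℝ)/2 + 1/α))⁻¹ := by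
    rw [Real.rpow_neg hlam.le]
  have hsq : Real.sqrt lam = lam ^ ((1:ℝ)/2) := Real.sqrt_eq_rpow lam
  have hterm1 : (1/(n:ℝ)) * (σ^2 * (C₂ * lam ^ (-(1/2 + 1/α))))
      ≤ (C₂ + 1) * σ^2 / ((n:ℝ) * lam ^ ((1:ℝ)/2 + 1/α)) := by
    rw [hneg]
    rw [show (C₂ + 1) * σ^2 / ((n:ℝ) * lam ^ ((1:ℝ)/2 + 1/α))
        = (C₂+1) * σ^2 * ((n:ℝ)⁻¹ * (lam ^ ((1:ℝ)/2 + 1/α))⁻¹) by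
      rw [div_eq_mul_inv, mul_inv]]
    have hL : (1/(n:ℝ)) * (σ^2 * (C₂ * (lam ^ ((1:ℝ)/2 + 1/α))⁻¹))
        = C₂ * (σ^2 * ((n:ℝ)⁻¹ * (lam ^ ((1:ℝ)/2 + 1/α))⁻¹)) := by ring
    have hR : (C₂+1) * σ^2 * ((n:ℝ)⁻¹ * (lam ^ ((1:ℝ)/2 + 1/α))⁻¹)
        = (C₂+1) * (σ^2 * ((n:ℝ)⁻¹ * (lam ^ ((1:ℝ)/2 + 1/α))⁻¹)) := by ring
    rw [hL, hR]
    exact mul_le_mul_of_nonneg_right (by linarith) (by positivity)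
  have hterm2 : (1/(n:ℝ)) * ((Real.sqrt lam / 2) * X)
      ≤ (C₂ + 1) * lam ^ ((1:ℝ)/2) * ((1/(n:ℝ)) * X) := by
    rw [hsq]
    have h2 : (1/(n:ℝ)) * ((lam ^ ((1:ℝ)/2) / 2) * X)
        = (1/2) * (lam ^ ((1:ℝ)/2) * ((1/(n:ℝ)) * X)) := by ring
    rw [h2]
    have h3 : (C₂ + 1) * lam ^ ((1:ℝ)/2) * ((1/(n:ℝ)) * X)
        = (C₂ + 1) * (lam ^ ((1:ℝ)/2) * ((1/(n:ℝ)) * X)) := by ring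
    rw [h3]
    apply mul_le_mul_of_nonneg_right (by linarith)
    positivity
  have hfin : (1/(n:ℝ)) * (σ^2 * (C₂ * lam ^ (-(1/2 + 1/α))) + (Real.sqrt lam / 2) * X)
      = (1/(n:ℝ)) * (σ^2 * (C₂ * lam ^ (-(1/2 + 1/α))))
        + (1/(n:ℝ)) * ((Real.sqrt lam / 2) * X) := by ring
  rw [hfin]
  linarith [hterm1, hterm2]
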